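/- Let ℍ̄ = {z ∈ ℂ : Im z ≥ 0} be the closed upper half-plane and f : ℍ̄ → ℝP² a map such that the restrictions f|_{ℍ} (to the open half-plane) and f|_{ℝ} are each continuous and injective, and such that for every sequence (z_n) in the open half-plane ℍ converging to a point x ∈ ℝ, one has f(z_n) → f(x). Then f is continuous and injective on all of ℍ̄. -/

import Mathlib

open scoped LinearAlgebra.Projectivization

/-- The quotient topology on the real projective plane
`ℝP² = ℙ ℝ (Fin 3 → ℝ)` (as a quotient of `(Fin 3 → ℝ) ∖ {0}`). -/
noncomputable instance : TopologicalSpace (ℙ ℝ (Fin 3 → ℝ)) :=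
  inferInstanceAs (TopologicalSpace
    (Quotient (projectivizationSetoid ℝ (Fin 3 → ℝ))))

section Stmt13AuxSection

open Complex Set Metric Filter

noncomputable section
namespace Stmt13Aux

def I01 : Set ℝ := Set.Icc 0 1

lemma zero_mem_I01 : (0:ℝ) ∈ I01 := by constructor <;> norm_num
lemma one_mem_I01 : (1:ℝ) ∈ I01 := by constructor <;> norm_num

/-- Constancy of continuous `2πiℤ`-valued functions on preconnected sets. -/
lemma constancy {s : Set ℝ} (hs : IsPreconnected s) {D : ℝ → ℂ}
    (hD : ContinuousOn D s) (h1 : ∀ t ∈ s, Complex.exp (D t) = 1)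
    {a b : ℝ} (ha : a ∈ s) (hb : b ∈ s) : D a = D b := by
  have key : ∀ t ∈ s, ∃ n : ℤ, D t = n * (2 * Real.pi * I) := fun t ht =>
    Complex.exp_eq_one_iff.mp (h1 t ht)
  have him : ∀ (t : ℝ) (n : ℤ), D t = n * (2 * Real.pi * I) → (D t).im = n * (2 * Real.pi) := by
    intro t n hn
    rw [hn]
    simp [Complex.mul_im]
  -- helper : no strict inequality possible between im-values
  have helper : ∀ a' ∈ s, ∀ b' ∈ s, (D a').im < (D b').im → False := by
    intro a' ha' b' hb' hlt
    obtain ⟨na, hna⟩ := key a' ha'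
    obtain ⟨nb, hnb⟩ := key b' hb'
    have hima := him a' na hna
    have himb := him b' nb hnb
    have hpi := Real.pi_pos
    have hn : na < nb := by
      have : (na : ℝ) < nb := by
        rw [hima, himb] at hlt
        nlinarith
      exact_mod_cast this
    -- the midpoint value (2 na + 1) * π lies in the image
    have himage : IsPreconnected ((fun t => (D t).im) '' s) :=
      hs.image _ (Complex.continuous_im.comp_continuousOn hD)
    have hmem : ((2 * (na:ℝ) + 1) * Real.pi) ∈ Set.Icc ((D a').im) ((D b').im) := by
      constructor
      · rw [hima]; nlinarith
      · rw [himb]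
        have : (na : ℝ) + 1 ≤ nb := by exact_mod_cast hn
        nlinarith
    have hsub := himage.Icc_subset (mem_image_of_mem _ ha') (mem_image_of_mem _ hb')
    obtain ⟨t, hts, hval⟩ := hsub hmem
    obtain ⟨nt, hnt⟩ := key t hts
    have himt := him t nt hnt
    simp only [] at hval
    rw [himt] at hval
    have : (2 * (nt:ℝ)) = 2 * (na:ℝ) + 1 := by nlinarith
    have : (2 * nt : ℤ) = 2 * na + 1 := by exact_mod_cast this
    omega
  obtain ⟨na, hna⟩ := key a ha
  obtain ⟨nb, hnb⟩ := key b hb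
  have : (D a).im = (D b).im := by
    rcases lt_trichotomy (D a).im (D b).im with h | h | h
    · exact absurd h (fun h => helper a ha b hb h)
    · exact h
    · exact absurd h (fun h => helper b hb a ha h)
  rw [hna, hnb] at this ⊢
  have hpi := Real.pi_pos
  have : (na : ℝ) * (2 * Real.pi) = (nb : ℝ) * (2 * Real.pi) := by
    simpa [Complex.mul_im] using this
  have h2 : (na : ℝ) = nb := by nlinarith
  norm_cast at h2
  rw [h2]

/-- quotient of nearby nonzero values lies in the slit plane -/
lemma quot_slit {x y : ℂ} (hy : y ≠ 0) (hclose : ‖x - y‖ < ‖y‖) :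
    0 < (x / y).re := by
  have hy' : 0 < ‖y‖ := by
    simpa [norm_pos_iff] using hy
  have h1 : ‖x / y - 1‖ < 1 := by
    rw [div_sub_one hy, norm_div]
    exact (div_lt_one hy').mpr hclose
  have h2 : |(x / y - 1).re| ≤ ‖x / y - 1‖ := Complex.abs_re_le_norm _
  have h3 : (x / y - 1).re = (x / y).re - 1 := by simp
  rw [h3] at h2
  have := abs_le.mp h2
  linarith [this.1]

lemma exists_lift {γ : ℝ → ℂ} (hc : ContinuousOn γ I01) (h0 : ∀ t ∈ I01, γ t ≠ 0) :
    ∃ L : ℝ → ℂ, ContinuousOn L I01 ∧ ∀ t ∈ I01, Complex.exp (L t) = γ t := by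
  -- minimum of |γ|
  obtain ⟨t₀, ht₀, hmin⟩ := (isCompact_Icc (a := (0:ℝ)) (b := 1)).exists_isMinOn
    ⟨0, by constructor <;> norm_num⟩ (continuous_norm.comp_continuousOn hc)
  set m : ℝ := ‖γ t₀‖ with hm
  have hmpos : 0 < m := by
    simpa [hm, norm_pos_iff] using h0 t₀ ht₀
  -- uniform continuity
  have huc := (isCompact_Icc (a := (0:ℝ)) (b := 1)).uniformContinuousOn_of_continuous hc
  rw [Metric.uniformContinuousOn_iff] at huc
  obtain ⟨δ, hδ, hucδ⟩ := huc m hmpos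
  obtain ⟨n, hn⟩ := exists_nat_one_div_lt hδ
  set N : ℝ := (n : ℝ) + 1 with hN
  have hNpos : 0 < N := by positivity
  -- the nodes
  have hnode : ∀ k : ℕ, k ≤ n + 1 → ((k : ℝ) / N) ∈ I01 := by
    intro k hk
    constructor
    · positivity
    · rw [div_le_one hNpos, hN]
      exact_mod_cast hk
  have hmin' : ∀ t ∈ I01, m ≤ ‖γ t‖ := fun t ht => hmin ht
  -- key facts about min-clamped points
  have hclamp : ∀ t ∈ I01, ∀ k : ℕ, k ≤ n + 1 → min t ((k:ℝ)/N) ∈ I01 := by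
    intro t ht k hk
    constructor
    · exact le_min ht.1 (hnode k hk).1
    · exact min_le_of_left_le ht.2
  have hdist : ∀ t : ℝ, ∀ k : ℕ, |min t (((k:ℝ)+1)/N) - min t ((k:ℝ)/N)| < δ := by
    intro t k
    have h1 : ((k:ℝ))/N ≤ ((k:ℝ)+1)/N := by
      apply (div_le_div_iff_of_pos_right hNpos).mpr
      linarith
    have hstep : ((k:ℝ)+1)/N - ((k:ℝ))/N = 1/N := by ring
    have hmono : min t ((k:ℝ)/N) ≤ min t (((k:ℝ)+1)/N) := min_le_min le_rfl h1
    rw [abs_lt]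
    constructor
    · linarith
    · have : min t (((k:ℝ)+1)/N) - min t ((k:ℝ)/N) ≤ 1/N := by
        rcases le_total t ((k:ℝ)/N) with h | h
        · rw [min_eq_left h, min_eq_left (h.trans h1)]
          simp
          positivity
        · rcases le_total t (((k:ℝ)+1)/N) with h' | h'
          · rw [min_eq_left h', min_eq_right h]; linarith
          · rw [min_eq_right h', min_eq_right h]; linarith
      have hN1 : 1/N < δ := hn
      linarith
  -- the lift
  set q : ℕ → ℝ → ℂ := fun k t => γ (min t (((k:ℝ)+1)/N)) / γ (min t ((k:ℝ)/N)) with hq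
  set L : ℝ → ℂ := fun t =>
    Complex.log (γ 0) + ∑ k ∈ Finset.range (n+1), Complex.log (q k t) with hL
  have hqprop : ∀ t ∈ I01, ∀ k : ℕ, k < n + 1 → 0 < (q k t).re ∧ q k t ≠ 0 := by
    intro t ht k hk
    have hk1 : k ≤ n + 1 := by omega
    have hk2 : k + 1 ≤ n + 1 := by omega
    have ha : min t (((k:ℝ)+1)/N) ∈ I01 := by
      have := hclamp t ht (k+1) hk2; push_cast at this ⊢; exact this
    have hb : min t ((k:ℝ)/N) ∈ I01 := hclamp t ht k hk1
    have hbne : γ (min t ((k:ℝ)/N)) ≠ 0 := h0 _ hb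
    have hcl : dist (γ (min t (((k:ℝ)+1)/N))) (γ (min t ((k:ℝ)/N))) < m := by
      apply hucδ _ ha _ hb
      rw [Real.dist_eq]
      exact hdist t k
    have hcl' : ‖γ (min t (((k:ℝ)+1)/N)) - γ (min t ((k:ℝ)/N))‖
        < ‖γ (min t ((k:ℝ)/N))‖ := by
      rw [← Complex.dist_eq]
      exact lt_of_lt_of_le hcl (hmin' _ hb)
    have := quot_slit hbne hcl'
    refine ⟨this, ?_⟩
    intro hzero
    rw [hq] at hzero
    simp only [hzero] at this
    simp at this
  have hγmin : ∀ c : ℝ, c ∈ I01 → ContinuousOn (fun u => γ (min u c)) I01 := by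
    intro c hcI
    have : MapsTo (fun u => min u c) I01 I01 := fun u hu =>
      ⟨le_min hu.1 hcI.1, min_le_of_left_le hu.2⟩
    simpa [Function.comp_def] using
      hc.comp ((continuous_id.min continuous_const).continuousOn) this
  refine ⟨L, ?_, ?_⟩
  · -- continuity
    rw [hL]
    apply ContinuousOn.add continuousOn_const
    apply continuousOn_finset_sum
    intro k hk
    rw [Finset.mem_range] at hk
    intro t ht
    have hqc : ContinuousWithinAt (q k) I01 t := by
      have hnum := hγmin (((k:ℝ)+1)/N) (by have := hnode (k+1) (by omega); push_cast at this ⊢; exact this) t ht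
      have hden := hγmin ((k:ℝ)/N) (hnode k (by omega)) t ht
      exact hnum.div hden (h0 _ (hclamp t ht k (by omega)))
    have hsp : q k t ∈ Complex.slitPlane := Complex.mem_slitPlane_iff.mpr
      (Or.inl (hqprop t ht k hk).1)
    exact (continuousAt_clog hsp).comp_continuousWithinAt hqc
  · -- exp of the lift
    intro t ht
    have h0I : (0:ℝ) ∈ I01 := by constructor <;> norm_num
    rw [hL]
    rw [Complex.exp_add, Complex.exp_sum, Complex.exp_log (h0 0 h0I)]
    have hprod : ∀ m' : ℕ, m' ≤ n + 1 →
        ∏ k ∈ Finset.range m', Complex.exp (Complex.log (q k t))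
          = γ (min t ((m' : ℝ)/N)) / γ 0 := by
      intro m' hm'
      induction m' with
      | zero =>
        simp [min_eq_right ht.1, div_self (h0 0 h0I)]
      | succ j ih =>
        rw [Finset.prod_range_succ, ih (by omega)]
        rw [Complex.exp_log (hqprop t ht j (by omega)).2]
        rw [hq]
        have hjne : γ (min t ((j:ℝ)/N)) ≠ 0 := h0 _ (hclamp t ht j (by omega))
        have h0ne : γ 0 ≠ 0 := h0 0 h0I
        push_cast
        field_simp
    rw [hprod (n+1) le_rfl]
    have hNN : ((n:ℝ)+1)/N = 1 := by rw [hN]; field_simp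
    push_cast
    rw [hNN, min_eq_left ht.2]
    rw [mul_comm]
    exact div_mul_cancel₀ _ (h0 0 h0I)


open scoped Classical in
/-- The "winding displacement" of a path: difference of lift endpoints. -/
def wind (γ : ℝ → ℂ) : ℂ :=
  if h : ∃ L : ℝ → ℂ, ContinuousOn L I01 ∧ ∀ t ∈ I01, Complex.exp (L t) = γ t then
    h.choose 1 - h.choose 0
  else 0

lemma lift_diff_eq {γ L L' : ℝ → ℂ} (hL : ContinuousOn L I01)
    (he : ∀ t ∈ I01, Complex.exp (L t) = γ t)
    (hL' : ContinuousOn L' I01) (he' : ∀ t ∈ I01, Complex.exp (L' t) = γ t) :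
    L 1 - L 0 = L' 1 - L' 0 := by
  have hD : ContinuousOn (fun t => L t - L' t) I01 := hL.sub hL'
  have h1 : ∀ t ∈ I01, Complex.exp (L t - L' t) = 1 := by
    intro t ht
    rw [Complex.exp_sub, he t ht, he' t ht, div_self]
    rw [← he t ht]
    exact Complex.exp_ne_zero _
  have := constancy isPreconnected_Icc hD h1 zero_mem_I01 one_mem_I01
  linear_combination -this

lemma wind_eq {γ L : ℝ → ℂ} (hL : ContinuousOn L I01)
    (he : ∀ t ∈ I01, Complex.exp (L t) = γ t) : wind γ = L 1 - L 0 := by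
  rw [wind, dif_pos ⟨L, hL, he⟩]
  generalize_proofs h
  exact lift_diff_eq h.choose_spec.1 h.choose_spec.2 hL he

lemma wind_const (c : ℂ) (hc : c ≠ 0) : wind (fun _ => c) = 0 := by
  rw [wind_eq (L := fun _ => Complex.log c) continuousOn_const
    (fun t _ => Complex.exp_log hc)]
  simp

lemma wind_perturb {γ γ' : ℝ → ℂ} (hcγ : ContinuousOn γ I01) (hcγ' : ContinuousOn γ' I01)
    (hl : γ 0 = γ 1) (hl' : γ' 0 = γ' 1)
    (hclose : ∀ t ∈ I01, ‖γ' t - γ t‖ < ‖γ t‖) :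
    wind γ' = wind γ := by
  have hγ0 : ∀ t ∈ I01, γ t ≠ 0 := by
    intro t ht h
    have h1 := hclose t ht
    rw [h, sub_zero, norm_zero] at h1
    exact (norm_nonneg _).not_gt h1
  have hγ'0 : ∀ t ∈ I01, γ' t ≠ 0 := by
    intro t ht h
    have h1 := hclose t ht
    rw [h, zero_sub, norm_neg] at h1
    exact lt_irrefl _ h1
  obtain ⟨L, hL, he⟩ := exists_lift hcγ hγ0
  set L' : ℝ → ℂ := fun t => L t + Complex.log (γ' t / γ t) with hL'def
  have hq0 : ∀ t ∈ I01, γ' t / γ t ≠ 0 := fun t ht =>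
    div_ne_zero (hγ'0 t ht) (hγ0 t ht)
  have he' : ∀ t ∈ I01, Complex.exp (L' t) = γ' t := by
    intro t ht
    rw [hL'def]
    simp only []
    rw [Complex.exp_add, he t ht, Complex.exp_log (hq0 t ht)]
    rw [mul_comm]
    exact div_mul_cancel₀ _ (hγ0 t ht)
  have hL'c : ContinuousOn L' I01 := by
    apply hL.add
    intro t ht
    have hqc : ContinuousWithinAt (fun t => γ' t / γ t) I01 t :=
      (hcγ' t ht).div (hcγ t ht) (hγ0 t ht)
    have hsp : γ' t / γ t ∈ Complex.slitPlane :=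
      Complex.mem_slitPlane_iff.mpr (Or.inl (quot_slit (hγ0 t ht) (hclose t ht)))
    exact hqc.clog hsp
  rw [wind_eq hL'c he', wind_eq hL he, hL'def]
  simp only []
  rw [hl, hl']
  ring

lemma wind_homotopy {H : ℝ → ℝ → ℂ}
    (hH : ContinuousOn (fun p : ℝ × ℝ => H p.1 p.2) (I01 ×ˢ I01))
    (hne : ∀ s ∈ I01, ∀ t ∈ I01, H s t ≠ 0)
    (hloop : ∀ s ∈ I01, H s 0 = H s 1) :
    wind (H 0) = wind (H 1) := by
  have hslice : ∀ s ∈ I01, ContinuousOn (H s) I01 := by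
    intro s hs
    have h1 : ContinuousOn (fun t : ℝ => ((s, t) : ℝ × ℝ)) I01 :=
      (Continuous.prodMk_right s).continuousOn
    have := hH.comp h1 (fun t ht => ⟨hs, ht⟩)
    simpa [Function.comp_def] using this
  have hloc : ∀ s ∈ I01, ∃ δ > 0, ∀ s' ∈ I01, |s' - s| < δ →
      wind (H s') = wind (H s) := by
    intro s hs
    obtain ⟨t₀, ht₀, hmin⟩ := (isCompact_Icc (a := (0:ℝ)) (b := 1)).exists_isMinOn
      ⟨0, zero_mem_I01⟩ (continuous_norm.comp_continuousOn (hslice s hs))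
    set m : ℝ := ‖H s t₀‖ with hm
    have hmpos : 0 < m := by
      simpa [hm, norm_pos_iff] using hne s hs t₀ ht₀
    have huc := ((isCompact_Icc (a := (0:ℝ)) (b := 1)).prod
      (isCompact_Icc (a := (0:ℝ)) (b := 1))).uniformContinuousOn_of_continuous hH
    rw [Metric.uniformContinuousOn_iff] at huc
    obtain ⟨δ, hδ, hucδ⟩ := huc m hmpos
    refine ⟨δ, hδ, ?_⟩
    intro s' hs' hss'
    apply wind_perturb (hslice s hs) (hslice s' hs') (hloop s hs) (hloop s' hs')
    intro t ht
    have hd : dist ((s', t) : ℝ × ℝ) ((s, t) : ℝ × ℝ) < δ := by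
      rw [Prod.dist_eq]
      simp [Real.dist_eq, hss', hδ.le]
    have h2 := hucδ (s', t) ⟨hs', ht⟩ (s, t) ⟨hs, ht⟩ hd
    simp only [Complex.dist_eq] at h2
    exact lt_of_lt_of_le h2 (hmin ht)
  haveI : PreconnectedSpace I01 := Subtype.preconnectedSpace isPreconnected_Icc
  have hlc : IsLocallyConstant (fun x : I01 => wind (H x.1)) := by
    rw [IsLocallyConstant.iff_exists_open]
    intro x
    obtain ⟨δ, hδ, hx⟩ := hloc x.1 x.2
    refine ⟨Subtype.val ⁻¹' (ball x.1 δ), isOpen_ball.preimage continuous_subtype_val,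
      by simp [mem_ball, hδ], ?_⟩
    intro y hy
    exact hx y.1 y.2 (by simpa [Subtype.dist_eq, Real.dist_eq, mem_ball] using hy)
  have := hlc.apply_eq_of_preconnectedSpace ⟨0, zero_mem_I01⟩ ⟨1, one_mem_I01⟩
  simpa using this

lemma wind_odd {γ : ℝ → ℂ} (hc : ContinuousOn γ I01) (h0 : ∀ t ∈ I01, γ t ≠ 0)
    (hodd : ∀ t ∈ Set.Icc (0:ℝ) (1/2), γ (t + 1/2) = - γ t) : wind γ ≠ 0 := by
  obtain ⟨L, hL, he⟩ := exists_lift hc h0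
  set D : ℝ → ℂ := fun t => L (t + 1/2) - L t - Real.pi * Complex.I with hD
  have hsub : Set.Icc (0:ℝ) (1/2) ⊆ I01 := Set.Icc_subset_Icc le_rfl (by norm_num)
  have hmem : ∀ t ∈ Set.Icc (0:ℝ) (1/2), (t + 1/2) ∈ I01 := by
    intro t ht
    exact ⟨by linarith [ht.1], by linarith [ht.2]⟩
  have hDc : ContinuousOn D (Set.Icc 0 (1/2)) := by
    apply ContinuousOn.sub ?_ continuousOn_const
    apply ContinuousOn.sub ?_ (hL.mono hsub)
    have h1 : ContinuousOn (fun t : ℝ => t + 1/2) (Set.Icc 0 (1/2)) :=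
      (continuous_id.add continuous_const).continuousOn
    have := hL.comp h1 hmem
    simpa [Function.comp_def] using this
  have hD1 : ∀ t ∈ Set.Icc (0:ℝ) (1/2), Complex.exp (D t) = 1 := by
    intro t ht
    rw [hD]
    simp only []
    rw [Complex.exp_sub, Complex.exp_sub, he _ (hmem t ht), he _ (hsub ht),
      hodd t ht, Complex.exp_pi_mul_I]
    have := h0 t (hsub ht)
    field_simp
  have h12mem : (1:ℝ)/2 ∈ Set.Icc (0:ℝ) (1/2) := by constructor <;> norm_num
  have h0mem : (0:ℝ) ∈ Set.Icc (0:ℝ) (1/2) := by constructor <;> norm_num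
  have hconst : D (1/2) = D 0 := constancy isPreconnected_Icc hDc hD1 h12mem h0mem
  obtain ⟨n, hn⟩ := Complex.exp_eq_one_iff.mp (hD1 0 h0mem)
  have h1 : (1:ℝ)/2 + 1/2 = 1 := by norm_num
  have h2 : (0:ℝ) + 1/2 = 1/2 := by norm_num
  have e1 : L 1 - L 0 = D (1/2) + D 0 + 2*(Real.pi:ℂ)*Complex.I := by
    rw [hD]
    simp only [h1, h2]
    ring
  rw [wind_eq hL he, e1, hconst, hn]
  intro hcon
  have hre : ((2*n+1 : ℤ) : ℂ) * (2*(Real.pi:ℂ)*Complex.I) = 0 := by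
    push_cast
    linear_combination hcon
  have hpi : (2*(Real.pi:ℂ)*Complex.I) ≠ 0 := by
    simp [Real.pi_ne_zero, Complex.I_ne_zero, Complex.ofReal_ne_zero]
  have := mul_eq_zero.mp hre
  rcases this with h | h
  · have : (2*n+1 : ℤ) = 0 := by exact_mod_cast h
    omega
  · exact hpi h

/-- The standard unit-speed loop around the circle. -/
def eC (t : ℝ) : ℂ := Complex.exp (((2*Real.pi*t : ℝ) : ℂ) * Complex.I)

lemma eC_cont : Continuous eC := by
  apply Complex.continuous_exp.comp
  exact (Complex.continuous_ofReal.comp (by continuity)).mul continuous_const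

lemma eC_abs (t : ℝ) : ‖eC t‖ = 1 := by
  rw [eC, Complex.norm_exp]
  simp

lemma eC_ne (t : ℝ) : eC t ≠ 0 := by
  intro h
  have := eC_abs t
  rw [h] at this
  simp at this

lemma eC_zero : eC 0 = 1 := by
  rw [eC]
  norm_num

lemma eC_one : eC 1 = 1 := by
  rw [eC]
  rw [show ((2*Real.pi*1 : ℝ) : ℂ) * Complex.I = 2 * (Real.pi:ℂ) * Complex.I by push_cast; ring]
  exact Complex.exp_two_pi_mul_I

lemma eC_half (t : ℝ) : eC (t + 1/2) = - eC t := by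
  rw [eC, eC]
  have h1 : ((2*Real.pi*(t+1/2) : ℝ) : ℂ) * Complex.I
      = ((2*Real.pi*t : ℝ) : ℂ) * Complex.I + (Real.pi : ℂ) * Complex.I := by
    push_cast
    ring
  rw [h1, Complex.exp_add, Complex.exp_pi_mul_I]
  ring

/-- Local invariance of domain in the plane, via winding numbers. -/
lemma iod {g : ℂ → ℂ} {z₀ : ℂ} {r : ℝ} (hr : 0 < r)
    (hc : ContinuousOn g (closedBall z₀ r)) (hinj : Set.InjOn g (closedBall z₀ r)) :
    ∃ ε > 0, ball (g z₀) ε ⊆ g '' (ball z₀ r) := by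
  have hz₀ : z₀ ∈ closedBall z₀ r := mem_closedBall_self hr.le
  have habs : ∀ c : ℝ, ∀ t : ℝ, ‖(c:ℂ) * eC t‖ = |c| := by
    intro c t
    rw [norm_mul, Complex.norm_real, Real.norm_eq_abs, eC_abs, mul_one]
  have hmem' : ∀ c : ℝ, |c| ≤ r → ∀ t : ℝ, z₀ + (c:ℂ)*eC t ∈ closedBall z₀ r := by
    intro c hcr t
    rw [mem_closedBall, Complex.dist_eq, add_sub_cancel_left, habs]
    exact hcr
  have hmems : ∀ t : ℝ, z₀ + (r:ℂ)*eC t ∈ sphere z₀ r := by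
    intro t
    rw [mem_sphere, Complex.dist_eq, add_sub_cancel_left, habs]
    exact _root_.abs_of_pos hr
  have hsubform : ∀ c : ℝ, ∀ t : ℝ, z₀ - (c:ℂ)*eC t = z₀ + ((-c : ℝ):ℂ)*eC t := by
    intro c t
    push_cast
    ring
  have hne2 : ∀ a b : ℝ, 0 < a + b → ∀ t : ℝ,
      z₀ + (a:ℂ)*eC t ≠ z₀ - (b:ℂ)*eC t := by
    intro a b hab t h
    have h2 : ((a:ℂ) + (b:ℂ)) * eC t = 0 := by linear_combination h
    rcases mul_eq_zero.mp h2 with h3 | h3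
    · have : ((a + b : ℝ) : ℂ) = 0 := by push_cast; linear_combination h3
      rw [Complex.ofReal_eq_zero] at this
      linarith
    · exact eC_ne t h3
  -- the minimum of |g w - g z₀| over the sphere
  obtain ⟨w₀, hw₀, hminw⟩ := (isCompact_sphere z₀ r).exists_isMinOn
    (NormedSpace.sphere_nonempty.mpr hr.le)
    (continuous_norm.comp_continuousOn
      ((hc.mono sphere_subset_closedBall).sub continuousOn_const))
  set m : ℝ := ‖g w₀ - g z₀‖ with hm
  have hw₀ne : w₀ ≠ z₀ := by
    intro h
    have := hw₀
    rw [h, mem_sphere, dist_self] at this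
    linarith
  have hmpos : 0 < m := by
    rw [hm]
    have : g w₀ - g z₀ ≠ 0 :=
      sub_ne_zero.mpr (fun h => hw₀ne (hinj (sphere_subset_closedBall hw₀) hz₀ h))
    simpa [norm_pos_iff] using this
  have hminw' : ∀ t : ℝ, m ≤ ‖g (z₀ + (r:ℂ)*eC t) - g z₀‖ :=
    fun t => hminw (hmems t)
  refine ⟨m, hmpos, ?_⟩
  intro q hq
  rw [mem_ball, Complex.dist_eq] at hq
  by_cases hqim : q ∈ g '' (closedBall z₀ r)
  · obtain ⟨w, hw, hgw⟩ := hqim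
    refine ⟨w, ?_, hgw⟩
    rw [mem_ball]
    rcases lt_or_eq_of_le (mem_closedBall.mp hw) with h | h
    · exact h
    · exfalso
      have : m ≤ ‖g w - g z₀‖ := hminw (by rwa [mem_sphere])
      rw [hgw] at this
      linarith
  · exfalso
    have hgne : ∀ w ∈ closedBall z₀ r, g w - q ≠ 0 := by
      intro w hw h
      exact hqim ⟨w, hw, (sub_eq_zero.mp h)⟩
    have hpq : g z₀ - q ≠ 0 := hgne z₀ hz₀
    -- continuity of the basic 2-parameter families
    have hinnerC : ∀ c₁ : ℝ, Continuous (fun p : ℝ × ℝ => ((c₁ * p.1 : ℝ):ℂ) * eC p.2) := by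
      intro c₁
      exact (Complex.continuous_ofReal.comp (continuous_const.mul continuous_fst)).mul
        (eC_cont.comp continuous_snd)
    -- γq and γp and ψ
    set γq : ℝ → ℂ := fun t => g (z₀ + (r:ℂ)*eC t) - q with hγq
    set γp : ℝ → ℂ := fun t => g (z₀ + (r:ℂ)*eC t) - g z₀ with hγp
    set ψ : ℝ → ℂ := fun t => g (z₀ + (r:ℂ)*eC t) - g (z₀ - (r:ℂ)*eC t) with hψ
    have hcont_out : ContinuousOn (fun t : ℝ => g (z₀ + (r:ℂ)*eC t)) I01 := by
      apply hc.comp (Continuous.continuousOn (continuous_const.add (continuous_const.mul eC_cont)))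
      intro t _
      exact hmem' r (by rw [_root_.abs_of_pos hr]) t
    have hcont_in : ContinuousOn (fun t : ℝ => g (z₀ - (r:ℂ)*eC t)) I01 := by
      have : ContinuousOn (fun t : ℝ => g (z₀ + ((-r : ℝ):ℂ)*eC t)) I01 := by
        apply hc.comp (Continuous.continuousOn (continuous_const.add (continuous_const.mul eC_cont)))
        intro t _
        exact hmem' (-r) (by rw [_root_.abs_neg, _root_.abs_of_pos hr]) t
      apply this.congr
      intro t _
      show g (z₀ - (r:ℂ)*eC t) = g (z₀ + ((-r : ℝ):ℂ)*eC t)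
      rw [hsubform]
    -- loops
    have hloopq : γq 0 = γq 1 := by rw [hγq]; simp [eC_zero, eC_one]
    have hloopp : γp 0 = γp 1 := by rw [hγp]; simp [eC_zero, eC_one]
    have hloopψ : ψ 0 = ψ 1 := by rw [hψ]; simp [eC_zero, eC_one]
    -- Step A1 : wind γq = 0
    have hA1 : wind γq = 0 := by
      set H : ℝ → ℝ → ℂ := fun s t => g (z₀ + ((r * s : ℝ):ℂ)*eC t) - q with hH
      have hH0 : H 0 = fun _ => g z₀ - q := by
        funext t
        rw [hH]
        norm_num
      have hH1 : H 1 = γq := by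
        funext t
        rw [hH, hγq]
        norm_num
      have hwh : wind (H 0) = wind (H 1) := by
        apply wind_homotopy
        · have hmt : Set.MapsTo (fun p : ℝ × ℝ => z₀ + ((r * p.1 : ℝ):ℂ) * eC p.2)
              (I01 ×ˢ I01) (closedBall z₀ r) := by
            intro p hp
            apply hmem'
            rw [_root_.abs_of_nonneg (by nlinarith [hp.1.1] : (0:ℝ) ≤ r * p.1)]
            nlinarith [hp.1.2]
          exact (hc.comp (continuous_const.add (hinnerC r)).continuousOn hmt).sub
            continuousOn_const
        · intro s hs t ht
          rw [hH]
          apply hgne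
          apply hmem'
          rw [_root_.abs_of_nonneg (by nlinarith [hs.1] : (0:ℝ) ≤ r * s)]
          nlinarith [hs.2]
        · intro s hs
          rw [hH]
          simp [eC_zero, eC_one]
      rw [hH0, hH1] at hwh
      rw [← hwh]
      exact wind_const _ hpq
    -- Step A2 : wind γq = wind γp
    have hA2 : wind γq = wind γp := by
      apply wind_perturb (hγp ▸ (hcont_out.sub continuousOn_const))
        (hγq ▸ (hcont_out.sub continuousOn_const)) hloopp hloopq
      intro t ht
      have h1 : γq t - γp t = g z₀ - q := by rw [hγq, hγp]; ring
      rw [h1]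
      calc ‖g z₀ - q‖ < m := by
            rw [← norm_neg]
            simpa [neg_sub] using hq
        _ ≤ ‖γp t‖ := hminw' t
    -- Step A3 : wind γp = wind ψ
    have hA3 : wind γp = wind ψ := by
      set H : ℝ → ℝ → ℂ := fun s t => g (z₀ + (r:ℂ)*eC t) - g (z₀ - ((r * s : ℝ):ℂ)*eC t)
        with hH
      have hH0 : H 0 = γp := by
        funext t
        rw [hH, hγp]
        norm_num
      have hH1 : H 1 = ψ := by
        funext t
        rw [hH, hψ]
        norm_num
      have hwh : wind (H 0) = wind (H 1) := by
        apply wind_homotopy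
        · apply ContinuousOn.sub
          · apply (hcont_out.comp (continuous_snd.continuousOn))
            intro p hp
            exact hp.2
          · have hmt : Set.MapsTo (fun p : ℝ × ℝ => z₀ - ((r * p.1 : ℝ):ℂ) * eC p.2)
                (I01 ×ˢ I01) (closedBall z₀ r) := by
              intro p hp
              show z₀ - ((r * p.1 : ℝ):ℂ) * eC p.2 ∈ closedBall z₀ r
              rw [hsubform]
              apply hmem'
              rw [_root_.abs_neg, _root_.abs_of_nonneg (by nlinarith [hp.1.1] : (0:ℝ) ≤ r * p.1)]
              nlinarith [hp.1.2]
            exact hc.comp (continuous_const.sub (hinnerC r)).continuousOn hmt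
        · intro s hs t ht
          rw [hH]
          apply sub_ne_zero.mpr
          intro heq
          have hd : z₀ + (r:ℂ)*eC t ≠ z₀ - ((r*s : ℝ):ℂ)*eC t := by
            have := hne2 r (r*s) (by nlinarith [hs.1]) t
            simpa using this
          exact hd (hinj (hmem' r (by rw [_root_.abs_of_pos hr]) t)
            (by rw [hsubform]; exact hmem' (-(r*s)) (by rw [_root_.abs_neg, _root_.abs_of_nonneg (by nlinarith [hs.1] : (0:ℝ) ≤ r*s)]; nlinarith [hs.2]) t) heq)
        · intro s hs
          rw [hH]
          simp [eC_zero, eC_one]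
      rw [hH0, hH1] at hwh
      exact hwh
    -- Step A4 : wind ψ ≠ 0
    have hA4 : wind ψ ≠ 0 := by
      apply wind_odd
      · exact (hψ ▸ (hcont_out.sub hcont_in))
      · intro t ht
        rw [hψ]
        apply sub_ne_zero.mpr
        intro heq
        exact (hne2 r r (by linarith) t) (hinj (hmem' r (by rw [_root_.abs_of_pos hr]) t)
          (by rw [hsubform]; exact hmem' (-r) (by rw [_root_.abs_neg, _root_.abs_of_pos hr]) t) heq)
      · intro t ht
        rw [hψ]
        simp only [eC_half]
        have e1 : z₀ + (r:ℂ) * -eC t = z₀ - (r:ℂ)*eC t := by ring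
        have e2 : z₀ - (r:ℂ) * -eC t = z₀ + (r:ℂ)*eC t := by ring
        rw [e1, e2]
        ring
    rw [hA2, hA3] at hA1
    exact hA4 hA1

/-- the quotient projection onto `ℝP²` -/
def pmk : {v : Fin 3 → ℝ // v ≠ 0} → ℙ ℝ (Fin 3 → ℝ) :=
  @Quotient.mk' _ (projectivizationSetoid ℝ (Fin 3 → ℝ))

lemma pmk_isQuotientMap : Topology.IsQuotientMap pmk :=
  isQuotientMap_quotient_mk'

lemma fin3_cases : ∀ i j : Fin 3, j = i ∨ j = i + 1 ∨ j = i + 2 := by decide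

/-- affine chart domain -/
def chartSet (i : Fin 3) : Set (ℙ ℝ (Fin 3 → ℝ)) := {Q | Q.rep i ≠ 0}

/-- affine chart map into `ℂ` -/
def chartMap (i : Fin 3) (Q : ℙ ℝ (Fin 3 → ℝ)) : ℂ :=
  ((Q.rep (i+1) / Q.rep i : ℝ) : ℂ) + ((Q.rep (i+2) / Q.rep i : ℝ) : ℂ) * Complex.I

/-- the subtype-level version of the chart map -/
def chartAux (i : Fin 3) (v : {v : Fin 3 → ℝ // v ≠ 0}) : ℂ :=
  ((v.1 (i+1) / v.1 i : ℝ) : ℂ) + ((v.1 (i+2) / v.1 i : ℝ) : ℂ) * Complex.I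

lemma mk'_eq (v : {v : Fin 3 → ℝ // v ≠ 0}) :
    pmk v = Projectivization.mk ℝ v.1 v.2 := rfl

lemma rep_scaling (v : {v : Fin 3 → ℝ // v ≠ 0}) :
    ∃ a : ℝ, a ≠ 0 ∧ (pmk v).rep = a • v.1 := by
  rw [mk'_eq]
  set Q := Projectivization.mk ℝ v.1 v.2 with hQ
  have h1 : Projectivization.mk ℝ Q.rep Q.rep_nonzero = Q := Q.mk_rep
  rw [hQ] at h1
  obtain ⟨a, ha⟩ := (Projectivization.mk_eq_mk_iff' ℝ _ _ _ _).mp h1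
  refine ⟨a, ?_, ha.symm⟩
  intro h0
  rw [h0, zero_smul] at ha
  exact Q.rep_nonzero ha.symm

lemma rep_coord_ne (i : Fin 3) (v : {v : Fin 3 → ℝ // v ≠ 0}) :
    (pmk v).rep i ≠ 0 ↔ v.1 i ≠ 0 := by
  obtain ⟨a, ha, hrep⟩ := rep_scaling v
  rw [hrep]
  simp [Pi.smul_apply, smul_eq_mul, ha]

lemma chartMap_mk' (i : Fin 3) (v : {v : Fin 3 → ℝ // v ≠ 0}) (hv : v.1 i ≠ 0) :
    chartMap i (pmk v) = chartAux i v := by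
  obtain ⟨a, ha, hrep⟩ := rep_scaling v
  rw [chartMap, chartAux, hrep]
  simp only [Pi.smul_apply, smul_eq_mul]
  rw [mul_div_mul_left _ _ ha, mul_div_mul_left _ _ ha]

lemma isOpen_chartSet (i : Fin 3) : IsOpen (chartSet i) := by
  apply (pmk_isQuotientMap.isOpen_preimage).mp
  have h1 : (pmk ⁻¹' chartSet i : Set {v : Fin 3 → ℝ // v ≠ 0})
      = {v | v.1 i ≠ 0} := by
    ext v
    exact rep_coord_ne i v
  rw [h1]
  have : ({v : {v : Fin 3 → ℝ // v ≠ 0} | v.1 i ≠ 0})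
      = (fun v : {v : Fin 3 → ℝ // v ≠ 0} => v.1 i) ⁻¹' ({0}ᶜ) := rfl
  rw [this]
  exact (isOpen_compl_singleton).preimage ((continuous_apply i).comp continuous_subtype_val)

lemma continuousOn_chartAux (i : Fin 3) :
    ContinuousOn (chartAux i) {v : {v : Fin 3 → ℝ // v ≠ 0} | v.1 i ≠ 0} := by
  have hcoord : ∀ j : Fin 3, Continuous (fun v : {v : Fin 3 → ℝ // v ≠ 0} => v.1 j) :=
    fun j => (continuous_apply j).comp continuous_subtype_val
  apply ContinuousOn.add
  · apply Complex.continuous_ofReal.comp_continuousOn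
    exact (hcoord (i+1)).continuousOn.div (hcoord i).continuousOn (fun v hv => hv)
  · apply ContinuousOn.mul ?_ continuousOn_const
    apply Complex.continuous_ofReal.comp_continuousOn
    exact (hcoord (i+2)).continuousOn.div (hcoord i).continuousOn (fun v hv => hv)

lemma continuousOn_chartMap (i : Fin 3) : ContinuousOn (chartMap i) (chartSet i) := by
  rw [_root_.continuousOn_iff']
  intro W hW
  refine ⟨chartSet i ∩ chartMap i ⁻¹' W, ?_, by ext x; simp [mem_inter_iff]; tauto⟩
  apply (pmk_isQuotientMap.isOpen_preimage).mp
  have h1 : (pmk ⁻¹' (chartSet i ∩ chartMap i ⁻¹' W) : Set {v : Fin 3 → ℝ // v ≠ 0})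
      = {v | v.1 i ≠ 0} ∩ chartAux i ⁻¹' W := by
    ext v
    simp only [mem_preimage, mem_inter_iff, mem_setOf_eq]
    constructor
    · rintro ⟨h2, h3⟩
      have h4 := (rep_coord_ne i v).mp h2
      exact ⟨h4, by rwa [chartMap_mk' i v h4] at h3⟩
    · rintro ⟨h2, h3⟩
      exact ⟨(rep_coord_ne i v).mpr h2, by rwa [chartMap_mk' i v h2]⟩
  rw [h1]
  apply (continuousOn_chartAux i).isOpen_inter_preimage ?_ hW
  have : ({v : {v : Fin 3 → ℝ // v ≠ 0} | v.1 i ≠ 0})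
      = (fun v : {v : Fin 3 → ℝ // v ≠ 0} => v.1 i) ⁻¹' ({0}ᶜ) := rfl
  rw [this]
  exact (isOpen_compl_singleton).preimage ((continuous_apply i).comp continuous_subtype_val)

lemma injOn_chartMap (i : Fin 3) : Set.InjOn (chartMap i) (chartSet i) := by
  intro Q hQ Q' hQ' h
  have hQi : Q.rep i ≠ 0 := hQ
  have hQ'i : Q'.rep i ≠ 0 := hQ'
  rw [Complex.ext_iff] at h
  obtain ⟨hre, him⟩ := h
  simp only [chartMap, Complex.add_re, Complex.ofReal_re, Complex.mul_re, Complex.I_re,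
    Complex.ofReal_im, Complex.I_im, Complex.add_im, Complex.mul_im] at hre him
  have hre' : Q.rep (i+1) / Q.rep i = Q'.rep (i+1) / Q'.rep i := by
    simpa using hre
  have him' : Q.rep (i+2) / Q.rep i = Q'.rep (i+2) / Q'.rep i := by
    simpa using him
  rw [← Q.mk_rep, ← Q'.mk_rep]
  rw [Projectivization.mk_eq_mk_iff' ℝ _ _ _ _]
  refine ⟨Q.rep i / Q'.rep i, ?_⟩
  funext j
  rw [Pi.smul_apply, smul_eq_mul]
  rcases fin3_cases i j with hj | hj | hj
  · rw [hj]
    exact div_mul_cancel₀ _ hQ'i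
  · rw [hj]
    calc Q.rep i / Q'.rep i * Q'.rep (i+1) = Q.rep i * (Q'.rep (i+1) / Q'.rep i) := by ring
      _ = Q.rep i * (Q.rep (i+1) / Q.rep i) := by rw [hre']
      _ = Q.rep (i+1) := by rw [mul_comm, div_mul_cancel₀ _ hQi]
  · rw [hj]
    calc Q.rep i / Q'.rep i * Q'.rep (i+2) = Q.rep i * (Q'.rep (i+2) / Q'.rep i) := by ring
      _ = Q.rep i * (Q.rep (i+2) / Q.rep i) := by rw [him']
      _ = Q.rep (i+2) := by rw [mul_comm, div_mul_cancel₀ _ hQi]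

lemma exists_chart (P : ℙ ℝ (Fin 3 → ℝ)) : ∃ i, P ∈ chartSet i := by
  have := P.rep_nonzero
  rw [Function.ne_iff] at this
  obtain ⟨i, hi⟩ := this
  exact ⟨i, by simpa [chartSet] using hi⟩

end Stmt13Aux
end
end Stmt13AuxSection

/-- let `f : ℍ̄ → ℝP²` be such that the restrictions to the open
upper half-plane `ℍ = {Im z > 0}` and to `ℝ = {Im z = 0}` are continuous and
injective, and such that `f(zₙ) → f(x)` whenever `zₙ ∈ ℍ` converges to `x ∈ ℝ`.
Then `f` is continuous and injective on `ℍ̄ = {Im z ≥ 0}`. -/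
theorem stmt13 (f : ℂ → ℙ ℝ (Fin 3 → ℝ))
    (hcH : ContinuousOn f {z : ℂ | 0 < z.im})
    (hiH : Set.InjOn f {z : ℂ | 0 < z.im})
    (hcR : ContinuousOn f {z : ℂ | z.im = 0})
    (hiR : Set.InjOn f {z : ℂ | z.im = 0})
    (hseq : ∀ (z : ℕ → ℂ) (x : ℂ), (∀ n, 0 < (z n).im) → x.im = 0 →
      Filter.Tendsto z Filter.atTop (nhds x) →
      Filter.Tendsto (fun n => f (z n)) Filter.atTop (nhds (f x))) :
    ContinuousOn f {z : ℂ | 0 ≤ z.im} ∧ Set.InjOn f {z : ℂ | 0 ≤ z.im} := by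
  classical
  have hHopen : IsOpen {z : ℂ | 0 < z.im} := isOpen_lt continuous_const Complex.continuous_im
  have hRclosed : IsClosed {z : ℂ | z.im = 0} :=
    isClosed_eq Complex.continuous_im continuous_const
  have hunion : {z : ℂ | 0 ≤ z.im} = {z : ℂ | 0 < z.im} ∪ {z : ℂ | z.im = 0} := by
    ext z
    simp only [Set.mem_setOf_eq, Set.mem_union]
    constructor
    · intro h
      rcases lt_or_eq_of_le h with h | h
      · exact Or.inl h
      · exact Or.inr h.symm
    · rintro (h | h)
      · exact h.le
      · exact h.ge
  -- continuity within the open half-plane at boundary points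
  have hCWA : ∀ x : ℂ, x.im = 0 → ContinuousWithinAt f {z : ℂ | 0 < z.im} x := by
    intro x hx
    rw [ContinuousWithinAt, Filter.tendsto_iff_seq_tendsto]
    intro u hu
    rw [tendsto_nhdsWithin_iff] at hu
    obtain ⟨hu1, hu2⟩ := hu
    rcases Filter.eventually_atTop.mp hu2 with ⟨N, hN⟩
    have h1 := hseq (fun n => u (n + N)) x (fun n => hN (n + N) (by omega)) hx
      (hu1.comp (Filter.tendsto_add_atTop_nat N))
    exact (Filter.tendsto_add_atTop_iff_nat N).mp h1
  have hcont : ContinuousOn f {z : ℂ | 0 ≤ z.im} := by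
    rw [hunion]
    intro x hx
    rcases hx with hx | hx
    · apply ContinuousWithinAt.union (hcH x hx)
      apply continuousWithinAt_of_notMem_closure
      rw [hRclosed.closure_eq]
      simp only [Set.mem_setOf_eq]
      exact ne_of_gt hx
    · exact ContinuousWithinAt.union (hCWA x hx) (hcR x hx)
  refine ⟨hcont, ?_⟩
  -- no cross equalities between the open half-plane and the real axis
  have hcross : ∀ z₀ : ℂ, 0 < z₀.im → ∀ x₀ : ℂ, x₀.im = 0 → f z₀ ≠ f x₀ := by
    intro z₀ hz₀ x₀ hx₀ heq
    obtain ⟨i, hi⟩ := Stmt13Aux.exists_chart (f z₀)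
    have hfc : ContinuousAt f z₀ := hcH.continuousAt (hHopen.mem_nhds hz₀)
    have hpre : f ⁻¹' Stmt13Aux.chartSet i ∈ nhds z₀ :=
      hfc.preimage_mem_nhds ((Stmt13Aux.isOpen_chartSet i).mem_nhds hi)
    obtain ⟨r, hr, hball⟩ := Metric.mem_nhds_iff.mp
      (Filter.inter_mem hpre (hHopen.mem_nhds hz₀))
    have hr2 : (0:ℝ) < r/2 := by linarith
    have hsub : Metric.closedBall z₀ (r/2) ⊆ (f ⁻¹' Stmt13Aux.chartSet i) ∩ {z : ℂ | 0 < z.im} :=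
      (Metric.closedBall_subset_ball (by linarith)).trans hball
    set g : ℂ → ℂ := fun z => Stmt13Aux.chartMap i (f z) with hg
    have hgc : ContinuousOn g (Metric.closedBall z₀ (r/2)) := by
      apply (Stmt13Aux.continuousOn_chartMap i).comp
        (hcH.mono (fun w hw => (hsub hw).2)) (fun w hw => (hsub hw).1)
    have hginj : Set.InjOn g (Metric.closedBall z₀ (r/2)) := by
      intro a ha b hb hab
      exact hiH (hsub ha).2 (hsub hb).2
        (Stmt13Aux.injOn_chartMap i (hsub ha).1 (hsub hb).1 hab)
    obtain ⟨ε, hε, hbcov⟩ := Stmt13Aux.iod hr2 hgc hginj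
    set V : Set (ℙ ℝ (Fin 3 → ℝ)) := Stmt13Aux.chartSet i ∩ Stmt13Aux.chartMap i ⁻¹' (Metric.ball (g z₀) ε) with hV
    have hVopen : IsOpen V :=
      (Stmt13Aux.continuousOn_chartMap i).isOpen_inter_preimage (Stmt13Aux.isOpen_chartSet i) Metric.isOpen_ball
    have hfz₀V : f z₀ ∈ V := ⟨hi, Metric.mem_ball_self hε⟩
    have hx₀V : f x₀ ∈ V := heq ▸ hfz₀V
    have hft : Filter.Tendsto f (nhdsWithin x₀ {z : ℂ | 0 < z.im}) (nhds (f x₀)) :=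
      hCWA x₀ hx₀
    have hpre2 : f ⁻¹' V ∈ nhdsWithin x₀ {z : ℂ | 0 < z.im} :=
      hft (hVopen.mem_nhds hx₀V)
    -- the approximating sequence from above
    set u : ℕ → ℂ := fun n => x₀ + ((1/(n+1) : ℝ) : ℂ) * Complex.I with hu
    have huim : ∀ n : ℕ, (u n).im = 1/(n+1) := by
      intro n
      rw [hu]
      simp only [Complex.add_im, Complex.mul_im, Complex.ofReal_re, Complex.ofReal_im,
        Complex.I_im, Complex.I_re, hx₀]
      ring
    have huH : ∀ n : ℕ, 0 < (u n).im := by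
      intro n
      rw [huim]
      positivity
    have hut : Filter.Tendsto u Filter.atTop (nhdsWithin x₀ {z : ℂ | 0 < z.im}) := by
      rw [tendsto_nhdsWithin_iff]
      constructor
      · have h0 : Filter.Tendsto (fun n : ℕ => (1/(n+1) : ℝ)) Filter.atTop (nhds 0) :=
          tendsto_one_div_add_atTop_nhds_zero_nat
        have h1 := ((Complex.continuous_ofReal.tendsto 0).comp h0).mul_const Complex.I
        have h2 := (tendsto_const_nhds (x := x₀) (f := Filter.atTop (α := ℕ))).add h1
        simpa [hu] using h2
      · exact Filter.Eventually.of_forall (fun n => huH n)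
    have hev : ∀ᶠ n in Filter.atTop, u n ∈ f ⁻¹' V := hut.eventually_mem hpre2
    rcases Filter.eventually_atTop.mp hev with ⟨N₀, hN₀⟩
    -- lower bound for imaginary parts on the closed ball
    have hzim : 0 < z₀.im - r/2 := by
      have hmem : z₀ - ((r/2 : ℝ) : ℂ) * Complex.I ∈ Metric.closedBall z₀ (r/2) := by
        rw [Metric.mem_closedBall, Complex.dist_eq]
        have : z₀ - ((r/2 : ℝ) : ℂ) * Complex.I - z₀ = -(((r/2 : ℝ) : ℂ) * Complex.I) := by ring
        rw [this, norm_neg, norm_mul, Complex.norm_real, Real.norm_eq_abs, Complex.norm_I, mul_one,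
          _root_.abs_of_pos hr2]
      have := (hsub hmem).2
      simp only [Set.mem_setOf_eq, Complex.sub_im, Complex.mul_im, Complex.ofReal_re,
        Complex.I_im, Complex.ofReal_im, Complex.I_re] at this
      linarith
    have him_lb : ∀ w ∈ Metric.closedBall z₀ (r/2), z₀.im - r/2 ≤ w.im := by
      intro w hw
      rw [Metric.mem_closedBall, Complex.dist_eq] at hw
      have h1 : |(w - z₀).im| ≤ ‖w - z₀‖ := Complex.abs_im_le_norm _
      rw [Complex.sub_im] at h1
      have := abs_le.mp (h1.trans hw)
      linarith [this.1]
    obtain ⟨N₁, hN₁⟩ := exists_nat_one_div_lt hzim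
    set n₀ : ℕ := max N₀ N₁ with hn₀
    have hn₀V : f (u n₀) ∈ V := hN₀ n₀ (le_max_left _ _)
    have hn₀im : (u n₀).im < z₀.im - r/2 := by
      rw [huim]
      have h2 : (1 : ℝ)/(n₀+1) ≤ 1/(N₁+1) := by
        apply div_le_div_of_nonneg_left (by norm_num) (by positivity)
        have : (N₁ : ℝ) ≤ n₀ := by exact_mod_cast le_max_right N₀ N₁
        linarith
      linarith
    have hn₀nb : u n₀ ∉ Metric.closedBall z₀ (r/2) := by
      intro hmem
      have := him_lb _ hmem
      linarith
    -- pull back through the chart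
    have h3 : Stmt13Aux.chartMap i (f (u n₀)) ∈ Metric.ball (g z₀) ε := hn₀V.2
    obtain ⟨w, hw, hgw⟩ := hbcov h3
    have hwcb : w ∈ Metric.closedBall z₀ (r/2) := Metric.ball_subset_closedBall hw
    have hfweq : f w = f (u n₀) :=
      Stmt13Aux.injOn_chartMap i (hsub hwcb).1 hn₀V.1 hgw
    have : w = u n₀ := hiH (hsub hwcb).2 (huH n₀) hfweq
    rw [this] at hwcb
    exact hn₀nb hwcb
  -- conclude injectivity
  intro a ha b hb hab
  simp only [Set.mem_setOf_eq] at ha hb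
  rcases lt_or_eq_of_le ha with ha' | ha' <;> rcases lt_or_eq_of_le hb with hb' | hb'
  · exact hiH ha' hb' hab
  · exact absurd hab (hcross a ha' b hb'.symm)
  · exact absurd hab.symm (hcross b hb' a ha'.symm)
  · exact hiR ha'.symm hb'.symm hab
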